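/- Let Y be a nonnegative random variable on a probability space with E[Y²] < ∞ and mean μ = E[Y] > 0. Then E[√Y] ≥ √μ · (1 − Var(Y)/(2μ²)), where Var(Y) = E[Y²] − μ². -/

import Mathlib

open MeasureTheory

theorem integral_sqrt_ge_of_secondMoment
    {Ω : Type*} [MeasurableSpace Ω] (P : Measure Ω) [IsProbabilityMeasure P]
    (Y : Ω → ℝ) (hYmeas : AEMeasurable Y P) (hYnonneg : ∀ ω, 0 ≤ Y ω)
    (hY2 : Integrable (fun ω => Y ω ^ 2) P)
    {μ : ℝ} (hμ : μ = ∫ ω, Y ω ∂P) (hμpos : 0 < μ) :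
    Real.sqrt μ * (1 - ((∫ ω, Y ω ^ 2 ∂P) - μ ^ 2) / (2 * μ ^ 2)) ≤
      ∫ ω, Real.sqrt (Y ω) ∂P := by
  set m := Real.sqrt μ with hmdef
  have hmpos : 0 < m := Real.sqrt_pos.mpr hμpos
  have hm2 : m ^ 2 = μ := Real.sq_sqrt hμpos.le
  have hY1 : Integrable Y P := by
    refine ((integrable_const (1:ℝ)).add hY2).mono' hYmeas.aestronglyMeasurable ?_
    filter_upwards with ω
    simp only [Pi.add_apply]
    rw [Real.norm_eq_abs, abs_of_nonneg (hYnonneg ω)]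
    nlinarith [sq_nonneg (Y ω - 1)]
  have hsqrtInt : Integrable (fun ω => Real.sqrt (Y ω)) P := by
    refine ((integrable_const (1:ℝ)).add hY1).mono'
      (Real.continuous_sqrt.measurable.comp_aemeasurable hYmeas).aestronglyMeasurable ?_
    filter_upwards with ω
    simp only [Pi.add_apply]
    have hs0 : 0 ≤ Real.sqrt (Y ω) := Real.sqrt_nonneg _
    have hsy : Real.sqrt (Y ω) ^ 2 = Y ω := Real.sq_sqrt (hYnonneg ω)
    rw [Real.norm_eq_abs, abs_of_nonneg hs0]
    nlinarith [sq_nonneg (Real.sqrt (Y ω) - 1)]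
  have hle : ∫ ω, (3/(2*m) * Y ω - 1/(2*m^3) * Y ω ^ 2) ∂P
      ≤ ∫ ω, Real.sqrt (Y ω) ∂P := by
    refine integral_mono ((hY1.const_mul _).sub (hY2.const_mul _)) hsqrtInt fun ω => ?_
    have hs0 : 0 ≤ Real.sqrt (Y ω) := Real.sqrt_nonneg _
    have hsy : Real.sqrt (Y ω) ^ 2 = Y ω := Real.sq_sqrt (hYnonneg ω)
    set s := Real.sqrt (Y ω) with hsdef
    have hkey : 0 ≤ s * (s - m)^2 * (s + 2*m) :=
      mul_nonneg (mul_nonneg hs0 (sq_nonneg _)) (by linarith)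
    have heq : 3/(2*m) * Y ω - 1/(2*m^3) * Y ω ^ 2
        = (3*m^2*s^2 - s^4)/(2*m^3) := by
      rw [← hsy]; field_simp
    rw [heq, div_le_iff₀ (by positivity)]
    nlinarith [hkey]
  have hcalc : ∫ ω, (3/(2*m) * Y ω - 1/(2*m^3) * Y ω ^ 2) ∂P
      = 3/(2*m) * μ - 1/(2*m^3) * ∫ ω, Y ω ^ 2 ∂P := by
    rw [integral_sub (hY1.const_mul _) (hY2.const_mul _), integral_const_mul, integral_const_mul, ← hμ]
  rw [hcalc] at hle
  refine le_trans (le_of_eq ?_) hle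
  rw [← hm2]
  field_simp
  ring
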